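/- Let $E$ be an exchange matrix and let $D^{\chi}_{ij} = \sum_k f_k^{-1} (e_{ik}/f_i - e_{jk}/f_j)^2$ be the chi-square distance. Then $D^{\chi}$ coincides with the distance obtained from Definition of natural distances with $g(\lambda) = \lambda^2$, i.e. $D^\chi_{ij} = B_{ii} + B_{jj} - 2B_{ij}$ where $B = \Pi^{-1/2} (E^s)^2 \Pi^{-1/2}$, and $D^\chi_{ij} = 0$ for equivalent vertices $i \sim j$. -/

import Mathlib

open BigOperators Matrix

/-- The chi-square distance coincides with the natural distance associated with
`g(λ) = λ²`, and vanishes between equivalent vertices. -/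
theorem chi_square_distance {n : ℕ}
    (E : Matrix (Fin n) (Fin n) ℝ) (hsym : E.IsSymm)
    (hnn : ∀ i j, 0 ≤ E i j) (hsum : ∑ i, ∑ j, E i j = 1)
    (f : Fin n → ℝ) (hf : ∀ i, f i = ∑ j, E i j) (hfpos : ∀ i, 0 < f i)
    (Es : Matrix (Fin n) (Fin n) ℝ)
    (hEs : ∀ i j, Es i j = (E i j - f i * f j) / Real.sqrt (f i * f j))
    (B : Matrix (Fin n) (Fin n) ℝ)
    (hB : B = Matrix.diagonal (fun i => (Real.sqrt (f i))⁻¹) * Es ^ 2 *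
      Matrix.diagonal (fun i => (Real.sqrt (f i))⁻¹))
    (Dchi : Fin n → Fin n → ℝ)
    (hDchi : ∀ i j, Dchi i j = ∑ k, (f k)⁻¹ * (E i k / f i - E j k / f j) ^ 2) :
    (∀ i j, Dchi i j = B i i + B j j - 2 * B i j) ∧
    (∀ i j, i ≠ j → (∀ k, E i k / f i = E j k / f j) → Dchi i j = 0) := by
  have hfne : ∀ i, f i ≠ 0 := fun i => (hfpos i).ne'
  have hsq : ∀ i, Real.sqrt (f i) * Real.sqrt (f i) = f i :=
    fun i => Real.mul_self_sqrt (hfpos i).le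
  have hsqne : ∀ i, Real.sqrt (f i) ≠ 0 :=
    fun i => (Real.sqrt_pos.mpr (hfpos i)).ne'
  have hEsym : ∀ a b, E a b = E b a := fun a b => by
    have := congrFun (congrFun hsym b) a
    simpa [Matrix.transpose_apply] using this
  have key : ∀ i j, B i j =
      ∑ k, (f k)⁻¹ * ((E i k / f i - f k) * (E j k / f j - f k)) := by
    intro i j
    have hBij : B i j = (Real.sqrt (f i))⁻¹ *
        (∑ k, Es i k * Es k j) * (Real.sqrt (f j))⁻¹ := by
      rw [hB, pow_two, Matrix.mul_diagonal, Matrix.diagonal_mul, Matrix.mul_apply]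
    rw [hBij, Finset.mul_sum, Finset.sum_mul]
    refine Finset.sum_congr rfl fun k _ => ?_
    rw [hEs, hEs, hEsym k j,
      Real.sqrt_mul (hfpos i).le, Real.sqrt_mul (hfpos k).le]
    set a := Real.sqrt (f i) with ha
    set b := Real.sqrt (f j) with hb
    set c := Real.sqrt (f k) with hc
    have ha0 : a ≠ 0 := hsqne i
    have hb0 : b ≠ 0 := hsqne j
    have hc0 : c ≠ 0 := hsqne k
    rw [show f i = a * a from (hsq i).symm, show f j = b * b from (hsq j).symm,
      show f k = c * c from (hsq k).symm]
    field_simp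
  constructor
  · intro i j
    rw [hDchi, key i i, key j j, key i j, Finset.mul_sum,
      ← Finset.sum_add_distrib, ← Finset.sum_sub_distrib]
    refine Finset.sum_congr rfl fun k _ => ?_
    ring
  · intro i j _ h
    rw [hDchi]
    refine Finset.sum_eq_zero fun k _ => ?_
    rw [h k]
    ring
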